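/- There exists a constant C = C(n) > 0 such that for all sufficiently small δ > 0 the following holds: if K ⊂ ℝⁿ is an origin-symmetric convex body with (1−δ)B∞ⁿ ⊆ K ⊆ B∞ⁿ, then there exists T ∈ GL(n,ℝ) such that (1−Cδ)B∞ⁿ ⊆ T⁻¹(K) ⊆ B∞ⁿ and ±e_j ∈ ∂(T⁻¹K) for every j = 1,…,n. -/

import Mathlib

open MeasureTheory RealInnerProductSpace ENNReal Pointwise

noncomputable section

/-- The unit cube `B∞ⁿ = {x : |xᵢ| ≤ 1 ∀ i}`. -/
def cube (n : ℕ) : Set (EuclideanSpace ℝ (Fin n)) := {x | ∀ i, |x i| ≤ 1}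

/-- The standard basis vector `e_j` of `ℝⁿ`. -/
def stdVec (n : ℕ) (j : Fin n) : EuclideanSpace ℝ (Fin n) :=
  EuclideanSpace.single j (1 : ℝ)

open Finset Matrix

set_option linter.unusedVariables false
set_option linter.unnecessarySeqFocus false


section auxmat
variable {n : ℕ} (A : Matrix (Fin n) (Fin n) ℝ)

lemma abs_det_le_permSum :
    |A.det| ≤ ∑ σ : Equiv.Perm (Fin n), ∏ j, |A (σ j) j| := by
  rw [Matrix.det_apply]
  refine (Finset.abs_sum_le_sum_abs _ _).trans_eq ?_
  refine Finset.sum_congr rfl fun σ _ => ?_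
  rcases Int.units_eq_one_or (Equiv.Perm.sign σ) with h | h <;>
    simp [h, Finset.abs_prod]

lemma permSum_le_prod_colsum :
    (∑ σ : Equiv.Perm (Fin n), ∏ j, |A (σ j) j|) ≤ ∏ j, ∑ i, |A i j| := by
  rw [Finset.prod_univ_sum]
  rw [show (∑ σ : Equiv.Perm (Fin n), ∏ j, |A (σ j) j|)
      = ∑ φ ∈ Finset.univ.image (fun σ : Equiv.Perm (Fin n) => ⇑σ), ∏ j, |A (φ j) j| by
    rw [Finset.sum_image (fun a _ b _ h => Equiv.coe_fn_injective h)]]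
  rw [Fintype.piFinset_univ]
  refine Finset.sum_le_sum_of_subset_of_nonneg (Finset.subset_univ _) ?_
  intro φ _ _
  positivity

lemma noninj_term_le (φ : Fin n → Fin n) (hφ : ¬ Function.Injective φ) :
    (∏ j, |A (φ j) j|) + ∑ σ : Equiv.Perm (Fin n), ∏ j, |A (σ j) j|
      ≤ ∏ j, ∑ i, |A i j| := by
  rw [Finset.prod_univ_sum, Fintype.piFinset_univ]
  rw [show (∑ σ : Equiv.Perm (Fin n), ∏ j, |A (σ j) j|)
      = ∑ ψ ∈ Finset.univ.image (fun σ : Equiv.Perm (Fin n) => ⇑σ), ∏ j, |A (ψ j) j| by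
    rw [Finset.sum_image (fun a _ b _ h => Equiv.coe_fn_injective h)]]
  have hφmem : φ ∉ Finset.univ.image (fun σ : Equiv.Perm (Fin n) => ⇑σ) := by
    simp only [Finset.mem_image, Finset.mem_univ, true_and]
    rintro ⟨σ, rfl⟩
    exact hφ σ.injective
  have hsub : insert φ (Finset.univ.image (fun σ : Equiv.Perm (Fin n) => ⇑σ))
      ⊆ Finset.univ := Finset.subset_univ _
  have h := Finset.sum_le_sum_of_subset_of_nonneg (f := fun ψ => ∏ j, |A (ψ j) j|) hsub
    (fun ψ _ _ => by positivity)
  rwa [Finset.sum_insert hφmem] at h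

end auxmat

lemma one_add_pow_le (m : ℕ) (t : ℝ) (h0 : 0 ≤ t) (h1 : t ≤ 1) :
    (1 + t) ^ m ≤ 1 + m * 2 ^ m * t := by
  induction m with
  | zero => simp
  | succ k ih =>
    have h2 : (0:ℝ) ≤ (k:ℝ) * 2 ^ k := by positivity
    have h4 : (1:ℝ) ≤ 2 ^ k := one_le_pow₀ (by norm_num)
    have hpow : (0:ℝ) ≤ (1+t)^k := by positivity
    calc (1 + t) ^ (k+1) = (1 + t) ^ k * (1 + t) := by ring
    _ ≤ (1 + k * 2 ^ k * t) * (1 + t) := by nlinarith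
    _ = 1 + ((k:ℝ) * 2 ^ k + 1) * t + ((k:ℝ) * 2 ^ k) * t * t := by ring
    _ ≤ 1 + ((k:ℝ)+1) * 2 ^ (k+1) * t := by
        have h5 : t * t ≤ t := by nlinarith
        rw [pow_succ]
        nlinarith
    _ = 1 + (↑(k+1)) * 2 ^ (k+1) * t := by push_cast; ring

section keysetup
variable {n : ℕ} {δ : ℝ} {K : Set (EuclideanSpace ℝ (Fin n))}

/-- elements of the dual body have entries bounded by 2 -/
lemma Pentry (hδ0 : 0 < δ) (hδh : δ ≤ 1/2) (hlow : (1 - δ) • cube n ⊆ K)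
    (u : Fin n → ℝ) (hu : ∀ x ∈ K, |∑ i, u i * x i| ≤ 1) (i : Fin n) : |u i| ≤ 2 := by
  have hstd : stdVec n i ∈ cube n := by
    intro k
    simp only [stdVec, EuclideanSpace.single_apply]
    split <;> norm_num
  have hx : (1 - δ) • stdVec n i ∈ K := hlow (Set.smul_mem_smul_set hstd)
  have h := hu _ hx
  have hsum : (∑ k, u k * ((1 - δ) • stdVec n i) k) = (1 - δ) * u i := by
    have : ∀ k, u k * ((1 - δ) • stdVec n i) k
        = if k = i then (1 - δ) * u i else 0 := by
      intro k
      simp only [PiLp.smul_apply, stdVec, EuclideanSpace.single_apply, smul_eq_mul]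
      split <;> simp_all <;> ring
    rw [Finset.sum_congr rfl fun k _ => this k, Finset.sum_ite_eq' univ i _]
    simp
  rw [hsum, abs_mul, abs_of_nonneg (by linarith : (0:ℝ) ≤ 1 - δ)] at h
  nlinarith [abs_nonneg (u i)]

/-- column sums of dual body elements -/
lemma Pcolsum (hδ0 : 0 < δ) (hδh : δ ≤ 1/2) (hlow : (1 - δ) • cube n ⊆ K)
    (u : Fin n → ℝ) (hu : ∀ x ∈ K, |∑ i, u i * x i| ≤ 1) :
    (∑ i, |u i|) ≤ 1 + 2 * δ := by
  classical
  set s : EuclideanSpace ℝ (Fin n) := WithLp.toLp 2 (fun i => if 0 ≤ u i then (1:ℝ) else -1) with hs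
  have hscube : s ∈ cube n := by
    intro k
    show |if 0 ≤ u k then (1:ℝ) else -1| ≤ 1
    split <;> norm_num
  have hx : (1 - δ) • s ∈ K := hlow (Set.smul_mem_smul_set hscube)
  have h := hu _ hx
  have hsum : (∑ k, u k * ((1 - δ) • s) k) = (1 - δ) * ∑ k, |u k| := by
    rw [Finset.mul_sum]
    refine Finset.sum_congr rfl fun k _ => ?_
    have : ((1 - δ) • s) k = (1 - δ) * (if 0 ≤ u k then (1:ℝ) else -1) := rfl
    rw [this]
    split_ifs with hk
    · rw [abs_of_nonneg hk]; ring
    · rw [abs_of_neg (lt_of_not_ge hk)]; ring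
  rw [hsum, abs_mul, abs_of_nonneg (by linarith : (0:ℝ) ≤ 1 - δ),
    abs_of_nonneg (Finset.sum_nonneg fun k _ => abs_nonneg _)] at h
  nlinarith [Finset.sum_nonneg (fun k (_ : k ∈ univ) => abs_nonneg (u k))]

end keysetup

lemma abs_det_le_prod_colsum {n : ℕ} (A : Matrix (Fin n) (Fin n) ℝ) :
    |A.det| ≤ ∏ j, ∑ i, |A i j| :=
  (abs_det_le_permSum A).trans (permSum_le_prod_colsum A)

lemma prod_le_pow_n {n : ℕ} (s : Finset (Fin n)) (f : Fin n → ℝ) (b : ℝ)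
    (h0 : ∀ i, 0 ≤ f i) (hb : ∀ i, f i ≤ b) (h1 : 1 ≤ b) : (∏ i ∈ s, f i) ≤ b ^ n :=
  calc (∏ i ∈ s, f i) ≤ ∏ _i ∈ s, b :=
        Finset.prod_le_prod (fun i _ => h0 i) (fun i _ => hb i)
  _ = b ^ s.card := by rw [Finset.prod_const]
  _ ≤ b ^ n := pow_le_pow_right₀ h1 (le_trans s.card_le_univ (by simp))

def cF (n : ℕ) : ℝ := (n.factorial : ℝ)
def cK1 (n : ℕ) : ℝ := 2 * n * 2 ^ n
def cK2 (n : ℕ) : ℝ := 2 * cF n * cK1 n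
def cK4 (n : ℕ) : ℝ := cF n * (cK2 n * 2 ^ n)
def cK6 (n : ℕ) : ℝ := cK4 n + 2 * cK1 n
def cK7 (n : ℕ) : ℝ := (2 + cK6 n) * 3 ^ n
def cK8 (n : ℕ) : ℝ := (2 + cK6 n) + cK1 n + (2 + cK6 n) * cK1 n
def Kc (n : ℕ) : ℝ := cK8 n + n * cK7 n

lemma cF_one_le (n : ℕ) : 1 ≤ cF n := by
  have := n.factorial_pos
  rw [cF]; exact_mod_cast this
lemma cK1_nonneg (n : ℕ) : 0 ≤ cK1 n := by rw [cK1]; positivity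
lemma cK2_nonneg (n : ℕ) : 0 ≤ cK2 n := by
  have := cF_one_le n; have := cK1_nonneg n; rw [cK2]; positivity
lemma cK4_nonneg (n : ℕ) : 0 ≤ cK4 n := by
  have := cF_one_le n; have := cK2_nonneg n; rw [cK4]; positivity
lemma cK6_nonneg (n : ℕ) : 0 ≤ cK6 n := by
  have := cK4_nonneg n; have := cK1_nonneg n; rw [cK6]; positivity
lemma cK7_nonneg (n : ℕ) : 0 ≤ cK7 n := by
  have := cK6_nonneg n; rw [cK7]; positivity
lemma cK8_nonneg (n : ℕ) : 0 ≤ cK8 n := by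
  have := cK6_nonneg n; have := cK1_nonneg n; rw [cK8]; positivity
lemma Kc_nonneg (n : ℕ) : 0 ≤ Kc n := by
  have := cK8_nonneg n; have := cK7_nonneg n; rw [Kc]; positivity

theorem inv_colsum_bound {n : ℕ} {δ : ℝ} (hδ0 : 0 < δ) (hδh : δ ≤ 1/2)
    (U : Matrix (Fin n) (Fin n) ℝ) (hc : ∀ j, (∑ i, |U i j|) ≤ 1 + 2*δ)
    (hM1 : 1 ≤ U.det) (i : Fin n) : (∑ j, |U⁻¹ j i|) ≤ 1 + Kc n * δ := by
  classical
  have hδ1 : δ ≤ 1 := by linarith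
  have hF1 : 1 ≤ cF n := cF_one_le n
  set c : Fin n → ℝ := fun j => ∑ k, |U k j| with hcdef
  have hc0 : ∀ j, 0 ≤ c j := fun j => Finset.sum_nonneg fun k _ => abs_nonneg _
  have hentry_le_c : ∀ k j, |U k j| ≤ c j := fun k j =>
    Finset.single_le_sum (fun k _ => abs_nonneg (U k j)) (mem_univ k)
  have hc2 : ∀ j, c j ≤ 2 := fun j => by have := hc j; simp only [hcdef] at this ⊢; linarith
  have h12δ : (1:ℝ) ≤ 1 + 2*δ := by linarith
  have hprodc_all : ∀ s : Finset (Fin n), (∏ j ∈ s, c j) ≤ 1 + cK1 n * δ := by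
    intro s
    refine le_trans (prod_le_pow_n s c (1+2*δ) hc0 hc h12δ) ?_
    have := one_add_pow_le n (2*δ) (by linarith) (by linarith)
    rw [cK1]; nlinarith
  have hprodc2 : ∀ s : Finset (Fin n), (∏ j ∈ s, c j) ≤ 2 ^ n :=
    fun s => prod_le_pow_n s c 2 hc0 hc2 (by norm_num)
  set g : Equiv.Perm (Fin n) → ℝ := fun σ => ∏ j, |U (σ j) j| with hgdef
  have hg0 : ∀ σ, 0 ≤ g σ := fun σ => Finset.prod_nonneg fun j _ => abs_nonneg _
  have hsum_perm_ge : (1:ℝ) ≤ ∑ σ : Equiv.Perm (Fin n), g σ :=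
    le_trans hM1 (le_trans (le_abs_self _) (abs_det_le_permSum U))
  obtain ⟨σs, -, hσmax⟩ := Finset.exists_max_image univ g univ_nonempty
  have hcard : ((Finset.univ : Finset (Equiv.Perm (Fin n))).card : ℝ) = cF n := by
    rw [Finset.card_univ, Fintype.card_perm, Fintype.card_fin, cF]
  have hgmax : 1 ≤ cF n * g σs := by
    have h := Finset.sum_le_card_nsmul univ g (g σs) (fun a _ => hσmax a (mem_univ a))
    rw [nsmul_eq_mul, hcard] at h
    linarith
  set a : Fin n → ℝ := fun j => |U (σs j) j| with hadef
  have ha0 : ∀ j, 0 ≤ a j := fun j => abs_nonneg _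
  have hac : ∀ j, a j ≤ c j := fun j => hentry_le_c _ j
  have ha2 : ∀ j, a j ≤ 2 := fun j => (hac j).trans (hc2 j)
  have hprodea0 : ∀ j, 0 ≤ ∏ l ∈ univ.erase j, a l :=
    fun j => Finset.prod_nonneg fun l _ => ha0 l
  have hprod_erase_a_ge : ∀ j, 1 ≤ 2 * cF n * ∏ l ∈ univ.erase j, a l := by
    intro j
    have h1 : a j * ∏ l ∈ univ.erase j, a l = ∏ l, a l :=
      Finset.mul_prod_erase univ a (mem_univ j)
    have h2 : 1 ≤ cF n * (a j * ∏ l ∈ univ.erase j, a l) := by rw [h1]; exact hgmax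
    nlinarith [mul_nonneg (mul_nonneg (sub_nonneg.mpr (ha2 j)) (hprodea0 j)) (by linarith : (0:ℝ) ≤ cF n)]
  have hoff : ∀ k j, k ≠ σs j → |U k j| ≤ cK2 n * δ := by
    intro k j hkj
    set φ : Fin n → Fin n := Function.update (⇑σs) j k with hφdef
    have hφn : ¬ Function.Injective φ := by
      intro hinj
      have h1 : φ j = k := by simp [hφdef]
      have hne : σs.symm k ≠ j := by
        intro h
        exact hkj (by rw [← h, Equiv.apply_symm_apply])
      have h2 : φ (σs.symm k) = k := by
        rw [hφdef, Function.update_of_ne hne, Equiv.apply_symm_apply]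
      have := hinj (h1.trans h2.symm)
      exact hne this.symm
    have hterm := noninj_term_le U φ hφn
    have hgφ : (∏ j', |U (φ j') j'|) = |U k j| * ∏ l ∈ univ.erase j, a l := by
      rw [← Finset.mul_prod_erase univ _ (mem_univ j)]
      congr 1
      · simp [hφdef]
      · refine Finset.prod_congr rfl fun l hl => ?_
        rw [hφdef, Function.update_of_ne (Finset.mem_erase.mp hl).1]
    rw [hgφ] at hterm
    have hub : |U k j| * (∏ l ∈ univ.erase j, a l) ≤ cK1 n * δ := by
      have := hprodc_all (univ : Finset (Fin n))
      have hsg := hsum_perm_ge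
      simp only [hgdef] at hsg
      linarith
    have h2F := hprod_erase_a_ge j
    rw [cK2]
    nlinarith [abs_nonneg (U k j), hprodea0 j, cK1_nonneg n]
  have hgσ_off : ∀ σ : Equiv.Perm (Fin n), σ ≠ σs → g σ ≤ cK2 n * 2 ^ n * δ := by
    intro σ hσ
    have hex : ∃ j₀, σ j₀ ≠ σs j₀ := by
      by_contra h
      push_neg at h
      exact hσ (Equiv.ext h)
    obtain ⟨j₀, hj₀⟩ := hex
    have h1 : g σ = |U (σ j₀) j₀| * ∏ l ∈ univ.erase j₀, |U (σ l) l| :=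
      (Finset.mul_prod_erase univ _ (mem_univ j₀)).symm
    have h2 : (∏ l ∈ univ.erase j₀, |U (σ l) l|) ≤ 2 ^ n := by
      refine le_trans (Finset.prod_le_prod (fun l _ => abs_nonneg _)
        (fun l _ => hentry_le_c (σ l) l)) (hprodc2 _)
    have h3 := hoff (σ j₀) j₀ hj₀
    rw [h1]
    have := cK2_nonneg n
    nlinarith [abs_nonneg (U (σ j₀) j₀),
      Finset.prod_nonneg (fun l (_ : l ∈ univ.erase j₀) => abs_nonneg (U (σ l) l)),
      pow_nonneg (by norm_num : (0:ℝ) ≤ 2) n]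
  have hprodalb : 1 - cK4 n * δ ≤ ∏ j, a j := by
    have hsplit : g σs + ∑ σ ∈ univ.erase σs, g σ = ∑ σ : Equiv.Perm (Fin n), g σ :=
      Finset.add_sum_erase univ g (mem_univ σs)
    have hM2 : U.det ≤ ∑ σ : Equiv.Perm (Fin n), g σ :=
      le_trans (le_abs_self _) (abs_det_le_permSum U)
    have herase : (∑ σ ∈ univ.erase σs, g σ) ≤ cF n * (cK2 n * 2 ^ n * δ) := by
      have h := Finset.sum_le_card_nsmul (univ.erase σs) g (cK2 n * 2 ^ n * δ)
        (fun σ hσ => hgσ_off σ (Finset.mem_erase.mp hσ).1)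
      rw [nsmul_eq_mul] at h
      have hcard2 : ((univ.erase σs).card : ℝ) ≤ cF n := by
        rw [← hcard]
        exact_mod_cast Finset.card_le_card (Finset.erase_subset _ _)
      have hb0 : (0:ℝ) ≤ cK2 n * 2 ^ n * δ := by
        have := cK2_nonneg n
        positivity
      nlinarith
    have : 1 ≤ ∏ j, a j + cF n * (cK2 n * 2 ^ n * δ) := by
      have := hM1
      simp only [hgdef, hadef] at hsplit herase ⊢
      linarith
    rw [cK4]
    linarith
  have halb : ∀ j, 1 - cK6 n * δ ≤ a j := by
    intro j
    have h1 : a j * ∏ l ∈ univ.erase j, a l = ∏ l, a l :=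
      Finset.mul_prod_erase univ a (mem_univ j)
    have h2 : (∏ l ∈ univ.erase j, a l) ≤ 1 + cK1 n * δ := by
      refine le_trans (Finset.prod_le_prod (fun l _ => ha0 l) (fun l _ => hac l)) ?_
      exact hprodc_all _
    have h3 : 1 - cK4 n * δ ≤ a j * (1 + cK1 n * δ) := by
      rw [← h1] at hprodalb
      nlinarith [ha0 j, hprodea0 j]
    rw [cK6]
    nlinarith [mul_nonneg (mul_nonneg (sub_nonneg.mpr (ha2 j)) (cK1_nonneg n)) hδ0.le]
  -- column sums of the updateRow matrices
  have hBcol : ∀ k j l, (∑ m, |(U.updateRow k (Pi.single j 1)) m l|)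
      = (if l = j then 1 else 0) + (c l - |U k l|) := by
    intro k j l
    rw [← Finset.add_sum_erase univ _ (mem_univ k)]
    have h1 : |(U.updateRow k (Pi.single j 1)) k l| = if l = j then 1 else 0 := by
      rw [Matrix.updateRow_self, Pi.single_apply]
      split_ifs <;> simp
    have h2 : (∑ m ∈ univ.erase k, |(U.updateRow k (Pi.single j 1)) m l|)
        = ∑ m ∈ univ.erase k, |U m l| := by
      refine Finset.sum_congr rfl fun m hm => ?_
      rw [Matrix.updateRow_ne (Finset.mem_erase.mp hm).1]
    have h3 : |U k l| + ∑ m ∈ univ.erase k, |U m l| = c l := by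
      simp only [hcdef]
      exact Finset.add_sum_erase univ (fun m => |U m l|) (mem_univ k)
    rw [h1, h2]
    linarith
  have hBcol_nonneg : ∀ k j l, 0 ≤ (if l = j then (1:ℝ) else 0) + (c l - |U k l|) := by
    intro k j l
    have h := hentry_le_c k l
    split_ifs <;> linarith
  have hBcol3 : ∀ k j l, (if l = j then (1:ℝ) else 0) + (c l - |U k l|) ≤ 3 := by
    intro k j l
    have := hc2 l
    have := abs_nonneg (U k l)
    split <;> linarith
  set j₀ : Fin n := σs.symm i with hj₀def
  have hij₀ : σs j₀ = i := Equiv.apply_symm_apply σs i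
  have haj₀ : a j₀ = |U i j₀| := by rw [hadef]; simp only [hij₀]
  have hca : c j₀ - |U i j₀| ≤ (2 + cK6 n) * δ := by
    have h1 := hc j₀
    have h2 := halb j₀
    rw [haj₀] at h2
    simp only [hcdef] at h1 ⊢
    linarith
  have hca0 : 0 ≤ c j₀ - |U i j₀| := by
    have := hentry_le_c i j₀; linarith
  have hdetB : ∀ j, |(U.updateRow i (Pi.single j 1)).det|
      ≤ ∏ l, ((if l = j then (1:ℝ) else 0) + (c l - |U i l|)) := by
    intro j
    refine (abs_det_le_prod_colsum _).trans_eq ?_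
    exact Finset.prod_congr rfl fun l _ => hBcol i j l
  have hprodB_off : ∀ j, j ≠ j₀ →
      (∏ l, ((if l = j then (1:ℝ) else 0) + (c l - |U i l|))) ≤ cK7 n * δ := by
    intro j hj
    rw [← Finset.mul_prod_erase univ _ (mem_univ j₀)]
    have hfj₀ : (if j₀ = j then (1:ℝ) else 0) + (c j₀ - |U i j₀|) = c j₀ - |U i j₀| := by
      rw [if_neg (fun h => hj h.symm)]; ring
    rw [hfj₀]
    have hperase : (∏ l ∈ univ.erase j₀, ((if l = j then (1:ℝ) else 0) + (c l - |U i l|)))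
        ≤ 3 ^ n :=
      prod_le_pow_n _ _ 3 (fun l => hBcol_nonneg i j l) (fun l => hBcol3 i j l) (by norm_num)
    have hp0 : 0 ≤ ∏ l ∈ univ.erase j₀, ((if l = j then (1:ℝ) else 0) + (c l - |U i l|)) :=
      Finset.prod_nonneg fun l _ => hBcol_nonneg i j l
    have hb0 : (0:ℝ) ≤ (2 + cK6 n) * δ := by
      have := cK6_nonneg n; positivity
    calc (c j₀ - |U i j₀|) * ∏ l ∈ univ.erase j₀, ((if l = j then (1:ℝ) else 0) + (c l - |U i l|))
        ≤ ((2 + cK6 n) * δ) * 3 ^ n := mul_le_mul hca hperase hp0 hb0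
    _ = cK7 n * δ := by rw [cK7]; ring
  have hprodB_diag :
      (∏ l, ((if l = j₀ then (1:ℝ) else 0) + (c l - |U i l|))) ≤ 1 + cK8 n * δ := by
    rw [← Finset.mul_prod_erase univ _ (mem_univ j₀)]
    have hfj₀ : (if j₀ = j₀ then (1:ℝ) else 0) + (c j₀ - |U i j₀|) = 1 + (c j₀ - |U i j₀|) := by
      rw [if_pos rfl]
    rw [hfj₀]
    have hperase : (∏ l ∈ univ.erase j₀, ((if l = j₀ then (1:ℝ) else 0) + (c l - |U i l|)))
        ≤ 1 + cK1 n * δ := by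
      refine le_trans (Finset.prod_le_prod (fun l hl => hBcol_nonneg i j₀ l) fun l hl => ?_)
        (hprodc_all _)
      rw [if_neg (Finset.mem_erase.mp hl).1]
      have := abs_nonneg (U i l)
      linarith
    have hp0 : 0 ≤ ∏ l ∈ univ.erase j₀, ((if l = j₀ then (1:ℝ) else 0) + (c l - |U i l|)) :=
      Finset.prod_nonneg fun l _ => hBcol_nonneg i j₀ l
    have h6 := cK6_nonneg n
    have h1 := cK1_nonneg n
    calc (1 + (c j₀ - |U i j₀|)) * ∏ l ∈ univ.erase j₀,
          ((if l = j₀ then (1:ℝ) else 0) + (c l - |U i l|))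
        ≤ (1 + (2 + cK6 n) * δ) * (1 + cK1 n * δ) := by
          refine mul_le_mul (by linarith) hperase hp0 ?_
          positivity
    _ ≤ 1 + cK8 n * δ := by
          rw [cK8]
          nlinarith [mul_nonneg (mul_nonneg (by linarith : (0:ℝ) ≤ 2 + cK6 n) h1)
            (mul_nonneg hδ0.le (by linarith : (0:ℝ) ≤ 1 - δ))]
  have hWval : ∀ j, |U⁻¹ j i| ≤ |(U.updateRow i (Pi.single j 1)).det| := by
    intro j
    rw [Matrix.inv_def, Matrix.smul_apply, Matrix.adjugate_apply, smul_eq_mul, abs_mul,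
      Ring.inverse_eq_inv']
    have hMpos : (0:ℝ) < U.det := by linarith
    rw [abs_of_nonneg (inv_nonneg.mpr hMpos.le)]
    have hinv1 : (U.det)⁻¹ ≤ 1 := by
      rw [inv_le_one_iff₀]; right; exact hM1
    exact mul_le_of_le_one_left (abs_nonneg _) hinv1
  have hsum1 : (∑ j, |U⁻¹ j i|) ≤ ∑ j, |(U.updateRow i (Pi.single j 1)).det| :=
    Finset.sum_le_sum fun j _ => hWval j
  have hsplit : |(U.updateRow i (Pi.single j₀ 1)).det|
      + ∑ j ∈ univ.erase j₀, |(U.updateRow i (Pi.single j 1)).det|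
      = ∑ j, |(U.updateRow i (Pi.single j 1)).det| :=
    Finset.add_sum_erase univ (fun j => |(U.updateRow i (Pi.single j 1)).det|) (mem_univ j₀)
  have hdiag : |(U.updateRow i (Pi.single j₀ 1)).det| ≤ 1 + cK8 n * δ :=
    (hdetB j₀).trans hprodB_diag
  have herase : (∑ j ∈ univ.erase j₀, |(U.updateRow i (Pi.single j 1)).det|)
      ≤ (n : ℝ) * (cK7 n * δ) := by
    have h := Finset.sum_le_card_nsmul (univ.erase j₀)
      (fun j => |(U.updateRow i (Pi.single j 1)).det|) (cK7 n * δ)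
      (fun j hj => (hdetB j).trans (hprodB_off j (Finset.mem_erase.mp hj).1))
    rw [nsmul_eq_mul] at h
    have hcard : ((univ.erase j₀).card : ℝ) ≤ (n : ℝ) := by
      have : (univ.erase j₀).card ≤ (univ : Finset (Fin n)).card :=
        Finset.card_le_card (Finset.erase_subset _ _)
      rw [Finset.card_univ, Fintype.card_fin] at this
      exact_mod_cast this
    have hb0 : (0:ℝ) ≤ cK7 n * δ := by have := cK7_nonneg n; positivity
    nlinarith
  have hfin : (∑ j, |U⁻¹ j i|) ≤ (1 + cK8 n * δ) + (n:ℝ) * (cK7 n * δ) := by linarith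
  rw [Kc]
  linarith


theorem key (n : ℕ) (δ : ℝ) (hδ0 : 0 < δ) (hδh : δ ≤ 1/2)
    (K : Set (EuclideanSpace ℝ (Fin n)))
    (hKconv : Convex ℝ K) (hKcomp : IsCompact K) (hKsym : K = -K)
    (hlow : (1 - δ) • cube n ⊆ K) (hup : K ⊆ cube n) :
    ∃ T : EuclideanSpace ℝ (Fin n) ≃ₗ[ℝ] EuclideanSpace ℝ (Fin n),
      (∀ z : EuclideanSpace ℝ (Fin n), z ∈ cube n → ∀ i, |(T z) i| ≤ 1 + Kc n * δ) ∧
      T.symm '' K ⊆ cube n ∧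
      ∀ j, stdVec n j ∈ T.symm '' K ∧ -stdVec n j ∈ T.symm '' K := by
  classical
  have hnegK : ∀ x ∈ K, -x ∈ K := by
    intro x hx
    rw [hKsym]
    exact Set.neg_mem_neg.mpr hx
  set S : Set (Matrix (Fin n) (Fin n) ℝ) :=
    {A | ∀ j, ∀ x ∈ K, |∑ i, A i j * x i| ≤ 1} with hSdef
  have hone : (1 : Matrix (Fin n) (Fin n) ℝ) ∈ S := by
    intro j x hx
    have : (∑ i, (1 : Matrix (Fin n) (Fin n) ℝ) i j * x i) = x j := by
      rw [Finset.sum_eq_single j]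
      · simp [Matrix.one_apply]
      · intro b _ hb; simp [Matrix.one_apply, hb]
      · simp
    rw [this]
    exact hup hx j
  have hSclosed : IsClosed S := by
    have : S = ⋂ (j : Fin n), ⋂ (x ∈ K),
        {A : Matrix (Fin n) (Fin n) ℝ | |∑ i, A i j * x i| ≤ 1} := by
      ext A
      simp only [hSdef, Set.mem_setOf_eq, Set.mem_iInter]
    rw [this]
    refine isClosed_iInter fun j => isClosed_iInter fun x => isClosed_iInter fun _ => ?_
    have hcont : Continuous fun A : Matrix (Fin n) (Fin n) ℝ => |∑ i, A i j * x i| :=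
      (continuous_finset_sum _ fun i _ =>
        (((continuous_apply j).comp (continuous_apply i)).mul continuous_const)).abs
    exact isClosed_le hcont continuous_const
  have hScompact : IsCompact S := by
    refine IsCompact.of_isClosed_subset
      (isCompact_univ_pi fun i : Fin n =>
        isCompact_univ_pi fun j : Fin n => isCompact_Icc (a := (-2:ℝ)) (b := 2))
      hSclosed ?_
    intro A hA
    refine Set.mem_univ_pi.mpr fun i => Set.mem_univ_pi.mpr fun j => ?_
    have h2 : |A i j| ≤ 2 := Pentry hδ0 hδh hlow (fun k => A k j) (hA j) i
    rw [Set.mem_Icc]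
    constructor <;> [nlinarith [neg_abs_le (A i j)]; nlinarith [le_abs_self (A i j)]]
  obtain ⟨U, hUS, hUmax'⟩ := hScompact.exists_isMaxOn ⟨1, hone⟩
    (continuous_id.matrix_det.continuousOn)
  have hmax : ∀ A ∈ S, A.det ≤ U.det := fun A hA => isMaxOn_iff.mp hUmax' A hA
  have hM1 : 1 ≤ U.det := by simpa using hmax 1 hone
  have hUdet : IsUnit U.det := isUnit_iff_ne_zero.mpr (by linarith)
  have hUW : U * U⁻¹ = 1 := Matrix.mul_nonsing_inv U hUdet
  have hWU : U⁻¹ * U = 1 := Matrix.nonsing_inv_mul U hUdet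
  have hcolsum : ∀ j, (∑ i, |U i j|) ≤ 1 + 2*δ :=
    fun j => Pcolsum hδ0 hδh hlow (fun i => U i j) (hUS j)
  -- Cramer's rule
  have hcramer : ∀ (b : Fin n → ℝ) (j : Fin n),
      (U.updateCol j b).det = U.det * ((U⁻¹ *ᵥ b) j) := by
    intro b j
    have h := Matrix.mulVec_cramer U b
    have h2 : U⁻¹ *ᵥ (U *ᵥ Matrix.cramer U b) = U⁻¹ *ᵥ (U.det • b) := by rw [h]
    rw [Matrix.mulVec_mulVec, hWU, Matrix.one_mulVec, Matrix.mulVec_smul] at h2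
    rw [← Matrix.cramer_apply, h2]
    simp
  -- the candidate contact points
  set v : Fin n → EuclideanSpace ℝ (Fin n) := fun j => WithLp.toLp 2 (fun k => U⁻¹ j k) with hvdef
  have hvK : ∀ j, v j ∈ K := by
    intro j
    by_contra hv
    obtain ⟨f, cc, hfK, hfv⟩ :=
      geometric_hahn_banach_closed_point hKconv hKcomp.isClosed hv
    have h0K : (0 : EuclideanSpace ℝ (Fin n)) ∈ K := by
      have h0c : (0 : EuclideanSpace ℝ (Fin n)) ∈ cube n := by
        intro k
        simp [cube]
      exact hlow ⟨0, h0c, smul_zero _⟩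
    have hc0 : 0 < cc := by
      have := hfK 0 h0K
      simpa using this
    set w : EuclideanSpace ℝ (Fin n) :=
      (InnerProductSpace.toDual ℝ (EuclideanSpace ℝ (Fin n))).symm f with hw
    have hwx : ∀ x : EuclideanSpace ℝ (Fin n), (∑ k, w k * x k) = f x := by
      intro x
      have h1 : (inner ℝ w x : ℝ) = f x := InnerProductSpace.toDual_symm_apply
      rw [← h1, PiLp.inner_apply]
      simp [RCLike.inner_apply, mul_comm]
    have hQ : ∀ x ∈ K, |f x| ≤ cc := by
      intro x hx
      have h1 := hfK x hx
      have h2 := hfK _ (hnegK x hx)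
      rw [map_neg] at h2
      rw [abs_le]
      constructor <;> linarith
    set b : Fin n → ℝ := fun k => cc⁻¹ * w k with hb
    have hbS : (U.updateCol j b) ∈ S := by
      intro l x hx
      by_cases hne : l = j
      · have hred : (∑ i, (U.updateCol j b) i l * x i) = ∑ i, b i * x i :=
          Finset.sum_congr rfl fun i _ => by rw [Matrix.updateCol_apply, if_pos hne]
        rw [hred]
        have hsum : (∑ k, b k * x k) = cc⁻¹ * f x := by
          rw [← hwx x, Finset.mul_sum]
          exact Finset.sum_congr rfl fun k _ => by rw [hb]; ring
        rw [hsum, abs_mul, abs_of_nonneg (inv_nonneg.mpr hc0.le)]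
        calc cc⁻¹ * |f x| ≤ cc⁻¹ * cc :=
              mul_le_mul_of_nonneg_left (hQ x hx) (inv_nonneg.mpr hc0.le)
        _ = 1 := inv_mul_cancel₀ hc0.ne'
      · have hred : (∑ i, (U.updateCol j b) i l * x i) = ∑ i, U i l * x i :=
          Finset.sum_congr rfl fun i _ => by rw [Matrix.updateCol_apply, if_neg hne]
        rw [hred]
        exact hUS l x hx
    have hdet' : (U.updateCol j b).det ≤ U.det := hmax _ hbS
    have hval : (U.updateCol j b).det = U.det * (cc⁻¹ * f (v j)) := by
      rw [hcramer b j]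
      congr 1
      rw [← hwx (v j)]
      simp only [Matrix.mulVec, dotProduct, hb, Finset.mul_sum]
      exact Finset.sum_congr rfl fun k _ => by rw [hvdef]; ring
    have hgt : 1 < cc⁻¹ * f (v j) := by
      have h1 : cc⁻¹ * cc = 1 := inv_mul_cancel₀ hc0.ne'
      nlinarith [mul_lt_mul_of_pos_left hfv (inv_pos.mpr hc0)]
    nlinarith
  -- the linear equivalence
  set V : Matrix (Fin n) (Fin n) ℝ := (U⁻¹)ᵀ with hV
  have hVUt : V * Uᵀ = 1 := by
    rw [hV, ← Matrix.transpose_mul U U⁻¹, hUW, Matrix.transpose_one]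
  have hUtV : Uᵀ * V = 1 := by
    rw [hV, ← Matrix.transpose_mul U⁻¹ U, hWU, Matrix.transpose_one]
  set T₀ : (Fin n → ℝ) ≃ₗ[ℝ] (Fin n → ℝ) :=
    LinearEquiv.ofLinear (Matrix.toLin' V) (Matrix.toLin' Uᵀ)
      (by rw [← Matrix.toLin'_mul, hVUt, Matrix.toLin'_one])
      (by rw [← Matrix.toLin'_mul, hUtV, Matrix.toLin'_one]) with hT₀
  set ee := WithLp.linearEquiv 2 ℝ (Fin n → ℝ) with hee
  have happ : ∀ (x : EuclideanSpace ℝ (Fin n)) (k : Fin n),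
      (((ee.trans T₀).trans ee.symm) x) k = ∑ m, V k m * x m := by
    intro x k
    simp [hT₀, hee, LinearEquiv.trans_apply, Matrix.toLin'_apply, Matrix.mulVec,
      dotProduct, WithLp.linearEquiv_apply, WithLp.linearEquiv_symm_apply]
  have hsapp : ∀ (x : EuclideanSpace ℝ (Fin n)) (k : Fin n),
      ((((ee.trans T₀).trans ee.symm)).symm x) k = ∑ m, U m k * x m := by
    intro x k
    simp [hT₀, hee, LinearEquiv.trans_apply, Matrix.toLin'_apply, Matrix.mulVec,
      dotProduct, WithLp.linearEquiv_apply, WithLp.linearEquiv_symm_apply,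
      Matrix.transpose_apply]
  refine ⟨(ee.trans T₀).trans ee.symm, ?_, ?_, ?_⟩
  · intro z hz i
    rw [happ]
    have h1 : |∑ m, V i m * z m| ≤ ∑ m, |V i m| := by
      refine le_trans (Finset.abs_sum_le_sum_abs _ _) (Finset.sum_le_sum fun m _ => ?_)
      rw [abs_mul]
      exact mul_le_of_le_one_right (abs_nonneg _) (hz m)
    have h2 : (∑ m, |V i m|) = ∑ m, |U⁻¹ m i| :=
      Finset.sum_congr rfl fun m _ => by rw [hV, Matrix.transpose_apply]
    have h3 := inv_colsum_bound hδ0 hδh U hcolsum hM1 i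
    rw [h2] at h1
    linarith
  · rintro y ⟨x, hx, rfl⟩ k
    rw [hsapp]
    exact hUS k x hx
  · intro j
    have hTv : (((ee.trans T₀).trans ee.symm)).symm (v j) = stdVec n j := by
      ext k
      rw [hsapp]
      have h1 : (∑ m, U m k * v j m) = (U⁻¹ * U) j k := by
        rw [Matrix.mul_apply]
        exact Finset.sum_congr rfl fun m _ => by rw [hvdef]; ring
      rw [h1, hWU, Matrix.one_apply]
      rw [stdVec, EuclideanSpace.single_apply]
      by_cases h : j = k
      · simp [h]
      · simp [h, Ne.symm h]
    exact ⟨⟨v j, hvK j, hTv⟩, ⟨-(v j), hnegK _ (hvK j), by rw [map_neg, hTv]⟩⟩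

lemma mem_frontier_of {n : ℕ} (j : Fin n) {s : Set (EuclideanSpace ℝ (Fin n))}
    (hs : s ⊆ cube n) (a : ℝ) (ha : |a| = 1) (hmem : a • stdVec n j ∈ s) :
    a • stdVec n j ∈ frontier s := by
  refine ⟨subset_closure hmem, ?_⟩
  intro hint
  obtain ⟨ε, hε, hball⟩ := Metric.isOpen_iff.mp isOpen_interior _ hint
  set p : EuclideanSpace ℝ (Fin n) := ((1 + ε/2) * a) • stdVec n j with hp
  have hdist : dist p (a • stdVec n j) = ε/2 := by
    rw [dist_eq_norm]
    have h1 : p - a • stdVec n j = ((1 + ε/2) * a - a) • stdVec n j := by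
      rw [hp, ← sub_smul]
    rw [h1, norm_smul]
    have h2 : ‖stdVec n j‖ = 1 := by
      rw [stdVec, EuclideanSpace.norm_single]
      norm_num
    rw [h2, mul_one]
    have h3 : (1 + ε/2) * a - a = (ε/2) * a := by ring
    rw [h3]
    rw [Real.norm_eq_abs, abs_mul, ha, mul_one, abs_of_pos (by linarith)]
  have hpc : p ∈ cube n := hs (interior_subset (hball (by
    rw [Metric.mem_ball, hdist]; linarith)))
  have hpj : p j = (1 + ε/2) * a := by
    rw [hp]
    have : (stdVec n j) j = 1 := by
      rw [stdVec, EuclideanSpace.single_apply, if_pos rfl]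
    rw [PiLp.smul_apply, this, smul_eq_mul, mul_one]
  have := hpc j
  rw [hpj, abs_mul, ha, mul_one, abs_of_pos (by linarith)] at this
  linarith

/-- Lemma 3: if `(1−δ)B∞ⁿ ⊆ K ⊆ B∞ⁿ`, then there is a linear map `T`
with `(1−Cδ)B∞ⁿ ⊆ T⁻¹(K) ⊆ B∞ⁿ` and `±e_j ∈ ∂(T⁻¹K)` for all `j`. -/
theorem close_to_min_parallelepiped (n : ℕ) :
    ∃ C : ℝ, 0 < C ∧ ∃ δ₀ : ℝ, 0 < δ₀ ∧
      ∀ δ : ℝ, 0 < δ → δ < δ₀ →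
        ∀ K : Set (EuclideanSpace ℝ (Fin n)),
          Convex ℝ K → IsCompact K → (interior K).Nonempty → K = -K →
          (1 - δ) • cube n ⊆ K → K ⊆ cube n →
          ∃ T : EuclideanSpace ℝ (Fin n) ≃ₗ[ℝ] EuclideanSpace ℝ (Fin n),
            (1 - C * δ) • cube n ⊆ T.symm '' K ∧ T.symm '' K ⊆ cube n ∧
            ∀ j : Fin n, stdVec n j ∈ frontier (T.symm '' K) ∧
              -stdVec n j ∈ frontier (T.symm '' K) := by
  have hKc := Kc_nonneg n
  have hCpos : (0:ℝ) < Kc n + 2 := by linarith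
  refine ⟨Kc n + 2, hCpos, min (1/2) (1/(Kc n + 2)), lt_min (by norm_num) (by positivity), ?_⟩
  intro δ hδ0 hδlt K hconv hcomp _hint hsym hlow hup
  have hδh : δ ≤ 1/2 := le_of_lt (lt_of_lt_of_le hδlt (min_le_left _ _))
  have hC1 : (Kc n + 2) * δ < 1 := by
    have h2 := lt_of_lt_of_le hδlt (min_le_right _ _)
    calc (Kc n + 2) * δ < (Kc n + 2) * (1/(Kc n + 2)) :=
          mul_lt_mul_of_pos_left h2 hCpos
    _ = 1 := by field_simp
  have hkey : (1 - (Kc n + 2)*δ)*(1 + Kc n*δ) ≤ 1 - δ := by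
    nlinarith [mul_nonneg (mul_nonneg hKc hδ0.le) hδ0.le]
  obtain ⟨T, hTexp, hTsub, hTstd⟩ := key n δ hδ0 hδh K hconv hcomp hsym hlow hup
  refine ⟨T, ?_, hTsub, ?_⟩
  · rintro z ⟨y, hy, rfl⟩
    have hTy := hTexp y hy
    have hTzK : T ((1 - (Kc n + 2) * δ) • y) ∈ K := by
      rw [_root_.map_smul]
      refine hlow ?_
      have h1δ : (0:ℝ) < 1 - δ := by linarith
      refine ⟨(1-δ)⁻¹ • ((1 - (Kc n + 2)*δ) • (T y)), ?_, smul_inv_smul₀ h1δ.ne' _⟩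
      intro k
      have hk := hTy k
      have habs : |((1-δ)⁻¹ • ((1 - (Kc n + 2)*δ) • T y)) k|
          = (1-δ)⁻¹ * ((1 - (Kc n + 2)*δ) * |T y k|) := by
        rw [PiLp.smul_apply, PiLp.smul_apply, smul_eq_mul, smul_eq_mul, abs_mul, abs_mul,
          abs_of_nonneg (inv_nonneg.mpr h1δ.le), abs_of_nonneg (by linarith : (0:ℝ) ≤ 1 - (Kc n + 2)*δ)]
      rw [habs]
      have h1 : (1 - (Kc n + 2)*δ) * |T y k| ≤ 1 - δ := by
        nlinarith [abs_nonneg (T y k)]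
      calc (1-δ)⁻¹ * ((1 - (Kc n + 2)*δ) * |T y k|) ≤ (1-δ)⁻¹ * (1-δ) :=
            mul_le_mul_of_nonneg_left h1 (inv_nonneg.mpr h1δ.le)
      _ = 1 := inv_mul_cancel₀ h1δ.ne'
    exact ⟨_, hTzK, by rw [LinearEquiv.symm_apply_apply]⟩
  · intro j
    obtain ⟨h1, h2⟩ := hTstd j
    constructor
    · have := mem_frontier_of j hTsub 1 (by norm_num) (by rwa [one_smul])
      rwa [one_smul] at this
    · have := mem_frontier_of j hTsub (-1) (by norm_num)
        (by rwa [neg_smul, one_smul])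
      rwa [neg_smul, one_smul] at this
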